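/- For the derivations Q_i on ℤ/2[x₁,…,xₙ] defined by Q_i(x_j) = x_j^{2^{i+1}}, one has Q_i ∘ Q_j = Q_j ∘ Q_i for all i, j. -/
import Mathlib


open MvPolynomial

/-- The `i`-th Milnor operation as a `ℤ/2`-linear derivation on `ℤ/2[x₁,…,xₙ]`,
determined by `Q_i(x_j) = x_j^{2^{i+1}}`. -/
noncomputable def milnorQ (n k : ℕ) :
    Derivation (ZMod 2) (MvPolynomial (Fin n) (ZMod 2)) (MvPolynomial (Fin n) (ZMod 2)) :=
  MvPolynomial.mkDerivation (ZMod 2) (fun i => X i ^ (2 ^ (k + 1)))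

/-- `Q_i ∘ Q_j = Q_j ∘ Q_i` for all `i, j`. -/
theorem milnorQ_comm (n i j : ℕ) (p : MvPolynomial (Fin n) (ZMod 2)) :
    milnorQ n i (milnorQ n j p) = milnorQ n j (milnorQ n i p) := by
  have h2 : ∀ m : ℕ, ((2 ^ (m + 1) : ℕ) : ZMod 2) = 0 := by
    intro m; push_cast; rw [show ((2 : ZMod 2)) = 0 from rfl]; simp
  have key : ⁅milnorQ n i, milnorQ n j⁆ = (0 : Derivation (ZMod 2) (MvPolynomial (Fin n) (ZMod 2)) (MvPolynomial (Fin n) (ZMod 2))) := by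
    apply MvPolynomial.derivation_ext
    intro k
    simp only [Derivation.commutator_apply, milnorQ, MvPolynomial.mkDerivation_X,
      Derivation.leibniz_pow, Derivation.zero_apply]
    rw [← Nat.cast_smul_eq_nsmul (ZMod 2), ← Nat.cast_smul_eq_nsmul (ZMod 2), h2, h2]
    simp
  have := congrArg (fun D : Derivation (ZMod 2) (MvPolynomial (Fin n) (ZMod 2)) (MvPolynomial (Fin n) (ZMod 2)) => D p) key
  simp only [Derivation.commutator_apply, Derivation.zero_apply] at this
  exact sub_eq_zero.mp this
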